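/- Let G=(X,N) be an undirected graph and B ≥ 1 an integer. Construct the deterministic election instance with two candidates c_0, c_1: a voter v_x with score vector ⟨1,0⟩ for each vertex x ∈ X, a voter v_e with score vector ⟨0,2⟩ for each edge e ∈ N, and a directed edge from v_x to v_e whenever x is an endpoint of e. Under single-news-article messages with budget B (a seed set of at most B voters is chosen, and all seeds send the same message, which consists of a single news article +1 or −1 on a single candidate), the maximum of ΔMoV^S over all feasible solutions equals 2·max{ e(X') : X' ⊆ X, |X'| ≤ B }, where e(X') is the number of edges of G with both endpoints in X'. -/
import Mathlib


open scoped Classical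

noncomputable section

/-- `v` is reachable from `s` through the edge set `Es` (every node reaches itself). -/
def Reaches {V : Type*} (Es : Set (V × V)) (s v : V) : Prop :=
  Relation.ReflTransGen (fun a b => (a, b) ∈ Es) s v

/-- The set of influenced voters: those reachable from some seed in `S`. -/
def influenced {V : Type*} [Fintype V] (Es : Set (V × V)) (S : Set V) : Finset V :=
  Finset.univ.filter (fun v => ∃ s ∈ S, Reaches Es s v)

/-- χ(S,E): the number of influenced voters. -/
def chi {V : Type*} [Fintype V] (Es : Set (V × V)) (S : Set V) : ℕ :=
  (influenced Es S).card

/-- The tie-breaking constant ε = 1/(1 + max_{v,i} π_v(i)). -/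
def eps {V : Type*} [Fintype V] {k : ℕ} (π : V → Fin k → ℕ) : ℚ :=
  1 / (1 + ((Finset.univ.sup fun v => Finset.univ.sup fun i => π v i : ℕ) : ℚ))

/-- The final score π*_v(i) = (1-ε)·π_v(i) + Σ_{s ∈ S, v reachable from s} m_s(i). -/
def finalScore {V : Type*} [Fintype V] {k : ℕ} (Es : Set (V × V)) (π : V → Fin k → ℕ)
    (S : Set V) (m : V → Fin k → ℤ) (v : V) (i : Fin k) : ℚ :=
  (1 - eps π) * (π v i : ℚ) +
    ∑ s ∈ Finset.univ.filter (fun s => s ∈ S ∧ Reaches Es s v), (m s i : ℚ)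

/-- V_c: voters whose initial score vector has a strict maximum at `c`. -/
def initVoters {V : Type*} [Fintype V] {k : ℕ} (π : V → Fin k → ℕ) (c : Fin k) : Finset V :=
  Finset.univ.filter (fun v => ∀ j, j ≠ c → π v j < π v c)

/-- V*_c: voters whose final score vector has a strict maximum at `c`. -/
def finalVoters {V : Type*} [Fintype V] {k : ℕ} (Es : Set (V × V)) (π : V → Fin k → ℕ)
    (S : Set V) (m : V → Fin k → ℤ) (c : Fin k) : Finset V :=
  Finset.univ.filter (fun v => ∀ j, j ≠ c →
    finalScore Es π S m v j < finalScore Es π S m v c)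

/-- MoV(S,M,E) = |V*_{c_0}| − max_{c ≠ c_0} |V*_c|. -/
def MoV {V : Type*} [Fintype V] {k : ℕ} [NeZero k] (Es : Set (V × V)) (π : V → Fin k → ℕ)
    (S : Set V) (m : V → Fin k → ℤ) : ℤ :=
  ((finalVoters Es π S m 0).card : ℤ) -
    (((Finset.univ.erase (0 : Fin k)).sup fun c => (finalVoters Es π S m c).card : ℕ) : ℤ)

/-- |M|: the total budget used by seed set `S` with messages `m`. -/
def totalBudget {V : Type*} [Fintype V] {k : ℕ} (S : Set V) (m : V → Fin k → ℤ) : ℕ :=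
  ∑ s ∈ Finset.univ.filter (fun s => s ∈ S), ∑ i, (m s i).natAbs

end

section DkS

variable {X : Type*} [Fintype X] [DecidableEq X] (G : SimpleGraph X)
  [DecidableRel G.Adj] [Fintype G.edgeSet]

/-- Voters: a node for each vertex of `G` and a node for each edge of `G`. -/
abbrev DkSVoter := X ⊕ G.edgeSet

/-- A directed edge from `v_x` to `v_e` whenever `x` is an endpoint of `e`. -/
def DkSEdges : Set (DkSVoter G × DkSVoter G) :=
  { p | ∃ (x : X) (e : G.edgeSet), x ∈ (e : Sym2 X) ∧
      p.1 = Sum.inl x ∧ p.2 = Sum.inr e }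

/-- Scores: vertex-nodes have ⟨1,0⟩, edge-nodes have ⟨0,2⟩. -/
def DkSScores : DkSVoter G → Fin 2 → ℕ
  | Sum.inl _ => ![1, 0]
  | Sum.inr _ => ![0, 2]

/-- e(X'): the number of edges of `G` with both endpoints in `X'`. -/
def edgesWithin (X' : Finset X) : ℕ :=
  (Finset.univ.filter fun e : G.edgeSet => ∀ x ∈ (e : Sym2 X), x ∈ X').card


set_option linter.unusedSectionVars false
set_option maxHeartbeats 1000000

omit [Fintype X] [DecidableEq X] [DecidableRel G.Adj] [Fintype G.edgeSet] in
lemma dks_reaches {s v : DkSVoter G} :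
    Reaches (DkSEdges G) s v ↔ s = v ∨
      ∃ (x : X) (e : G.edgeSet), x ∈ (e : Sym2 X) ∧ s = Sum.inl x ∧ v = Sum.inr e := by
  constructor
  · intro h
    induction h with
    | refl => exact Or.inl rfl
    | @tail b c hab hbc ih =>
      obtain ⟨x, e, hxe, hb, hc⟩ := hbc
      rcases ih with rfl | ⟨x', e', _, rfl, hb'⟩
      · exact Or.inr ⟨x, e, hxe, hb, hc⟩
      · simp only [hb'] at hb
        simp at hb
  · rintro (rfl | ⟨x, e, hxe, rfl, rfl⟩)
    · exact Relation.ReflTransGen.refl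
    · exact Relation.ReflTransGen.single ⟨x, e, hxe, rfl, rfl⟩

omit [Fintype X] [DecidableEq X] [DecidableRel G.Adj] [Fintype G.edgeSet] in
lemma reaches_inl_inr {x : X} {e : G.edgeSet} :
    Reaches (DkSEdges G) (Sum.inl x) (Sum.inr e) ↔ x ∈ (e : Sym2 X) := by
  rw [dks_reaches]; simp

omit [Fintype X] [DecidableEq X] [DecidableRel G.Adj] [Fintype G.edgeSet] in
lemma reaches_inr_inr {e' e : G.edgeSet} :
    Reaches (DkSEdges G) (Sum.inr e') (Sum.inr e) ↔ e' = e := by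
  rw [dks_reaches]; simp

lemma dks_M_le :
    (Finset.univ.sup fun v : DkSVoter G => Finset.univ.sup fun i => DkSScores G v i) ≤ 2 := by
  apply Finset.sup_le; intro v _; apply Finset.sup_le; intro i _
  rcases v with x | e <;> fin_cases i <;> norm_num [DkSScores]

lemma dks_M_eq (e : G.edgeSet) :
    (Finset.univ.sup fun v : DkSVoter G => Finset.univ.sup fun i => DkSScores G v i) = 2 := by
  refine le_antisymm (dks_M_le G) ?_
  have h : DkSScores G (Sum.inr e) 1 ≤ Finset.univ.sup fun i => DkSScores G (Sum.inr e) i :=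
    Finset.le_sup (Finset.mem_univ _)
  have h2 := Finset.le_sup
    (f := fun v : DkSVoter G => Finset.univ.sup fun i => DkSScores G v i)
    (Finset.mem_univ (Sum.inr e))
  calc (2:ℕ) = DkSScores G (Sum.inr e) 1 := rfl
    _ ≤ _ := le_trans h h2

lemma dks_eps_edge (e : G.edgeSet) : eps (DkSScores G) = 1/3 := by
  rw [eps, dks_M_eq G e]; norm_num

lemma dks_delta_pos (x : X) : 0 < 1 - eps (DkSScores G) := by
  have h1 : (1:ℕ) ≤ (Finset.univ.sup fun v : DkSVoter G => Finset.univ.sup fun i => DkSScores G v i) := by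
    have h0 := Finset.le_sup (f := fun i => DkSScores G (Sum.inl x) i) (Finset.mem_univ (0 : Fin 2))
    have h2 := Finset.le_sup
      (f := fun v : DkSVoter G => Finset.univ.sup fun i => DkSScores G v i)
      (Finset.mem_univ (Sum.inl x : DkSVoter G))
    calc (1:ℕ) = DkSScores G (Sum.inl x) 0 := rfl
      _ ≤ _ := le_trans h0 h2
  rw [eps]
  set M := (Finset.univ.sup fun v : DkSVoter G => Finset.univ.sup fun i => DkSScores G v i)
  have h1' : (1:ℚ) ≤ (M:ℚ) := by exact_mod_cast h1
  have h2 : 1/(1 + (M:ℚ)) ≤ 1/2 := by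
    apply one_div_le_one_div_of_le <;> linarith
  linarith

noncomputable def tcount (S : Set (DkSVoter G)) (v : DkSVoter G) : ℕ :=
  (Finset.univ.filter fun s => s ∈ S ∧ Reaches (DkSEdges G) s v).card

lemma sum_msg {S : Set (DkSVoter G)} {m : DkSVoter G → Fin 2 → ℤ} {c : Fin 2} {q : ℤ}
    (hm : ∀ s ∈ S, ∀ i : Fin 2, m s i = if i = c then q else 0) (v : DkSVoter G) (i : Fin 2) :
    ∑ s ∈ Finset.univ.filter (fun s => s ∈ S ∧ Reaches (DkSEdges G) s v), (m s i : ℚ)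
      = (tcount G S v : ℚ) * (if i = c then (q:ℚ) else 0) := by
  have h : ∀ s ∈ Finset.univ.filter (fun s => s ∈ S ∧ Reaches (DkSEdges G) s v),
      (m s i : ℚ) = if i = c then (q:ℚ) else 0 := by
    intro s hs
    rw [hm s (Finset.mem_filter.mp hs).2.1 i]
    split_ifs <;> simp
  rw [Finset.sum_congr rfl h, Finset.sum_const, nsmul_eq_mul, tcount]

lemma fs_eq {S : Set (DkSVoter G)} {m : DkSVoter G → Fin 2 → ℤ} {c : Fin 2} {q : ℤ}
    (hm : ∀ s ∈ S, ∀ i : Fin 2, m s i = if i = c then q else 0) (v : DkSVoter G) (i : Fin 2) :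
    finalScore (DkSEdges G) (DkSScores G) S m v i
      = (1 - eps (DkSScores G)) * (DkSScores G v i : ℚ)
        + (tcount G S v : ℚ) * (if i = c then (q:ℚ) else 0) := by
  rw [finalScore, sum_msg G hm]

lemma tcount_empty (v : DkSVoter G) : tcount G (∅ : Set (DkSVoter G)) v = 0 := by
  simp [tcount]

lemma aux_card {α β : Type*} [Fintype α] [Fintype β] (u : Finset (α ⊕ β)) :
    u.card = (Finset.univ.filter fun a => Sum.inl a ∈ u).card
      + (Finset.univ.filter fun b => Sum.inr b ∈ u).card := by
  classical
  have h1 : u.toLeft = Finset.univ.filter fun a => Sum.inl a ∈ u := by ext a; simp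
  have h2 : u.toRight = Finset.univ.filter fun b => Sum.inr b ∈ u := by ext b; simp
  rw [← Finset.card_toLeft_add_card_toRight (u := u), h1, h2]

noncomputable def SX (S : Set (DkSVoter G)) : Finset X :=
  Finset.univ.filter fun x => Sum.inl x ∈ S

noncomputable def ends (e : G.edgeSet) : Finset X :=
  Finset.univ.filter fun x => x ∈ (e : Sym2 X)

lemma mem_ends {x : X} {e : G.edgeSet} : x ∈ ends G e ↔ x ∈ (e : Sym2 X) := by
  simp [ends]

lemma ends_card (e : G.edgeSet) : (ends G e).card = 2 := by
  obtain ⟨e, he⟩ := e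
  revert he
  induction e using Sym2.ind with
  | _ a b =>
    intro he
    have hab : a ≠ b := G.ne_of_adj (G.mem_edgeSet.mp he)
    have h : ends G ⟨s(a,b), he⟩ = {a, b} := by
      ext z; simp [ends, Sym2.mem_iff]
    rw [h, Finset.card_insert_of_notMem (by simp [hab]), Finset.card_singleton]

lemma tcount_inr (S : Set (DkSVoter G)) (e : G.edgeSet) :
    tcount G S (Sum.inr e)
      = (ends G e ∩ SX G S).card + (if Sum.inr e ∈ S then 1 else 0) := by
  rw [tcount, aux_card]
  congr 1
  · congr 1
    ext x
    simp only [Finset.mem_filter, Finset.mem_univ, true_and, Finset.mem_inter,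
      mem_ends, SX, reaches_inl_inr]
    tauto
  · split_ifs with hS
    · apply Finset.card_eq_one.mpr
      refine ⟨e, ?_⟩
      ext e'
      simp only [Finset.mem_filter, Finset.mem_univ, true_and, reaches_inr_inr,
        Finset.mem_singleton]
      constructor
      · rintro ⟨_, rfl⟩; rfl
      · rintro rfl; exact ⟨hS, rfl⟩
    · apply Finset.card_eq_zero.mpr
      ext e'
      simp only [Finset.mem_filter, Finset.mem_univ, true_and, reaches_inr_inr,
        Finset.notMem_empty, iff_false, not_and]
      rintro h' rfl; exact hS h'


lemma card_filter_iff {A : Type*} [Fintype A] (p q : A → Prop)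
    [DecidablePred p] [DecidablePred q] (h : ∀ a, p a ↔ q a) :
    (Finset.univ.filter p).card = (Finset.univ.filter q).card := by
  congr 1
  ext a
  rw [Finset.mem_filter, Finset.mem_filter, h a]

lemma card_filter_add_compl {A : Type*} [Fintype A] (p q : A → Prop)
    [DecidablePred p] [DecidablePred q] (h : ∀ a, q a ↔ ¬ p a) :
    (Finset.univ.filter p).card + (Finset.univ.filter q).card = Fintype.card A := by
  classical
  rw [card_filter_iff q (fun a => ¬ p a) h,
    Finset.card_filter_add_card_filter_not p, Finset.card_univ]

lemma nat_gt_four_thirds {n : ℕ} : (4/3 : ℚ) < (n:ℚ) ↔ 2 ≤ n := by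
  constructor
  · intro h
    by_contra hn
    push_neg at hn
    have h1 : n ≤ 1 := by omega
    have h2 : (n:ℚ) ≤ 1 := by exact_mod_cast h1
    linarith
  · intro h
    have h2 : (2:ℚ) ≤ (n:ℚ) := by exact_mod_cast h
    linarith

lemma nat_lt_four_thirds {n : ℕ} : (n:ℚ) < (4/3 : ℚ) ↔ n ≤ 1 := by
  constructor
  · intro h
    by_contra hn
    push_neg at hn
    have h2 : (2:ℚ) ≤ (n:ℚ) := by exact_mod_cast hn
    linarith
  · intro h
    have h2 : (n:ℚ) ≤ 1 := by exact_mod_cast h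
    linarith

omit [DecidableEq X] [DecidableRel G.Adj] in
lemma mem_fv0 {S : Set (DkSVoter G)} {m : DkSVoter G → Fin 2 → ℤ} {v : DkSVoter G} :
    v ∈ finalVoters (DkSEdges G) (DkSScores G) S m 0 ↔
      finalScore (DkSEdges G) (DkSScores G) S m v 1
        < finalScore (DkSEdges G) (DkSScores G) S m v 0 := by
  simp only [finalVoters, Finset.mem_filter, Finset.mem_univ, true_and]
  constructor
  · intro h; exact h 1 (by decide)
  · intro h j hj
    fin_cases j
    · simp at hj
    · exact h

omit [DecidableEq X] [DecidableRel G.Adj] in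
lemma mem_fv1 {S : Set (DkSVoter G)} {m : DkSVoter G → Fin 2 → ℤ} {v : DkSVoter G} :
    v ∈ finalVoters (DkSEdges G) (DkSScores G) S m 1 ↔
      finalScore (DkSEdges G) (DkSScores G) S m v 0
        < finalScore (DkSEdges G) (DkSScores G) S m v 1 := by
  simp only [finalVoters, Finset.mem_filter, Finset.mem_univ, true_and]
  constructor
  · intro h; exact h 0 (by decide)
  · intro h j hj
    fin_cases j
    · exact h
    · simp at hj

section GoodBad

variable {S : Set (DkSVoter G)} {m : DkSVoter G → Fin 2 → ℤ} {c : Fin 2} {q : ℤ}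

lemma good_inl_mem (hm : ∀ s ∈ S, ∀ i : Fin 2, m s i = if i = c then q else 0)
    (hgood : (c = 0 ∧ q = 1) ∨ (c = 1 ∧ q = -1)) (x : X) :
    Sum.inl x ∈ finalVoters (DkSEdges G) (DkSScores G) S m 0 := by
  rw [mem_fv0, fs_eq G hm, fs_eq G hm]
  have hd := dks_delta_pos G x
  have ht : (0:ℚ) ≤ (tcount G S (Sum.inl x) : ℚ) := Nat.cast_nonneg _
  rcases hgood with ⟨rfl, rfl⟩ | ⟨rfl, rfl⟩ <;>
  · norm_num [DkSScores]
    linarith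

lemma good_inl_notMem (hm : ∀ s ∈ S, ∀ i : Fin 2, m s i = if i = c then q else 0)
    (hgood : (c = 0 ∧ q = 1) ∨ (c = 1 ∧ q = -1)) (x : X) :
    Sum.inl x ∉ finalVoters (DkSEdges G) (DkSScores G) S m 1 := by
  rw [mem_fv1]
  exact not_lt.mpr (le_of_lt ((mem_fv0 G).mp (good_inl_mem G hm hgood x)))

lemma good_inr_mem0_iff (hm : ∀ s ∈ S, ∀ i : Fin 2, m s i = if i = c then q else 0)
    (hgood : (c = 0 ∧ q = 1) ∨ (c = 1 ∧ q = -1)) (e : G.edgeSet) :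
    (Sum.inr e ∈ finalVoters (DkSEdges G) (DkSScores G) S m 0)
      ↔ 2 ≤ tcount G S (Sum.inr e) := by
  rw [mem_fv0, fs_eq G hm, fs_eq G hm, ← nat_gt_four_thirds, dks_eps_edge G e]
  rcases hgood with ⟨rfl, rfl⟩ | ⟨rfl, rfl⟩ <;>
  · norm_num [DkSScores]
    try constructor <;> intro h <;> linarith

lemma good_inr_mem1_iff (hm : ∀ s ∈ S, ∀ i : Fin 2, m s i = if i = c then q else 0)
    (hgood : (c = 0 ∧ q = 1) ∨ (c = 1 ∧ q = -1)) (e : G.edgeSet) :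
    (Sum.inr e ∈ finalVoters (DkSEdges G) (DkSScores G) S m 1)
      ↔ ¬ 2 ≤ tcount G S (Sum.inr e) := by
  have h2 : ¬ 2 ≤ tcount G S (Sum.inr e) ↔ tcount G S (Sum.inr e) ≤ 1 := by omega
  rw [mem_fv1, fs_eq G hm, fs_eq G hm, h2, ← nat_lt_four_thirds, dks_eps_edge G e]
  rcases hgood with ⟨rfl, rfl⟩ | ⟨rfl, rfl⟩ <;>
  · norm_num [DkSScores]
    try constructor <;> intro h <;> linarith

lemma bad_inr_mem1 (hm : ∀ s ∈ S, ∀ i : Fin 2, m s i = if i = c then q else 0)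
    (hbad : (c = 0 ∧ q = -1) ∨ (c = 1 ∧ q = 1)) (e : G.edgeSet) :
    Sum.inr e ∈ finalVoters (DkSEdges G) (DkSScores G) S m 1 := by
  rw [mem_fv1, fs_eq G hm, fs_eq G hm, dks_eps_edge G e]
  have ht : (0:ℚ) ≤ (tcount G S (Sum.inr e) : ℚ) := Nat.cast_nonneg _
  rcases hbad with ⟨rfl, rfl⟩ | ⟨rfl, rfl⟩ <;>
  · norm_num [DkSScores]
    linarith

lemma bad_inr_notMem0 (hm : ∀ s ∈ S, ∀ i : Fin 2, m s i = if i = c then q else 0)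
    (hbad : (c = 0 ∧ q = -1) ∨ (c = 1 ∧ q = 1)) (e : G.edgeSet) :
    Sum.inr e ∉ finalVoters (DkSEdges G) (DkSScores G) S m 0 := by
  rw [mem_fv0]
  exact not_lt.mpr (le_of_lt ((mem_fv1 G).mp (bad_inr_mem1 G hm hbad e)))

lemma card_fv0_good (hm : ∀ s ∈ S, ∀ i : Fin 2, m s i = if i = c then q else 0)
    (hgood : (c = 0 ∧ q = 1) ∨ (c = 1 ∧ q = -1)) :
    (finalVoters (DkSEdges G) (DkSScores G) S m 0).card
      = Fintype.card X
        + (Finset.univ.filter fun e : G.edgeSet => 2 ≤ tcount G S (Sum.inr e)).card := by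
  rw [← Finset.card_toLeft_add_card_toRight
    (u := finalVoters (DkSEdges G) (DkSScores G) S m 0)]
  have hL : (finalVoters (DkSEdges G) (DkSScores G) S m 0).toLeft = Finset.univ := by
    ext x
    simp only [Finset.mem_toLeft, Finset.mem_univ, iff_true]
    exact good_inl_mem G hm hgood x
  have hR : (finalVoters (DkSEdges G) (DkSScores G) S m 0).toRight
      = Finset.univ.filter fun e : G.edgeSet => 2 ≤ tcount G S (Sum.inr e) := by
    ext e
    simp only [Finset.mem_toRight, Finset.mem_filter, Finset.mem_univ, true_and]
    exact good_inr_mem0_iff G hm hgood e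
  rw [hL, hR, Finset.card_univ]

lemma card_fv1_good (hm : ∀ s ∈ S, ∀ i : Fin 2, m s i = if i = c then q else 0)
    (hgood : (c = 0 ∧ q = 1) ∨ (c = 1 ∧ q = -1)) :
    (finalVoters (DkSEdges G) (DkSScores G) S m 1).card
      + (Finset.univ.filter fun e : G.edgeSet => 2 ≤ tcount G S (Sum.inr e)).card
      = Fintype.card G.edgeSet := by
  rw [← Finset.card_toLeft_add_card_toRight
    (u := finalVoters (DkSEdges G) (DkSScores G) S m 1)]
  have hL : (finalVoters (DkSEdges G) (DkSScores G) S m 1).toLeft = ∅ := by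
    ext x
    simp only [Finset.mem_toLeft, Finset.notMem_empty, iff_false]
    exact good_inl_notMem G hm hgood x
  have hR : (finalVoters (DkSEdges G) (DkSScores G) S m 1).toRight
      = Finset.univ.filter fun e : G.edgeSet => ¬ 2 ≤ tcount G S (Sum.inr e) := by
    ext e
    simp only [Finset.mem_toRight, Finset.mem_filter, Finset.mem_univ, true_and]
    exact good_inr_mem1_iff G hm hgood e
  rw [hL, hR, Finset.card_empty, zero_add, add_comm]
  exact card_filter_add_compl _ _ (fun e => Iff.rfl)

end GoodBad


lemma MoV_eq (S : Set (DkSVoter G)) (m : DkSVoter G → Fin 2 → ℤ) :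
    MoV (DkSEdges G) (DkSScores G) S m
      = ((finalVoters (DkSEdges G) (DkSScores G) S m 0).card : ℤ)
        - ((finalVoters (DkSEdges G) (DkSScores G) S m 1).card : ℤ) := by
  rw [MoV]
  have h : (Finset.univ.erase (0 : Fin 2)) = {1} := by decide
  rw [h, Finset.sup_singleton]

lemma MoV_empty (m : DkSVoter G → Fin 2 → ℤ) :
    MoV (DkSEdges G) (DkSScores G) (∅ : Set (DkSVoter G)) m
      = (Fintype.card X : ℤ) - (Fintype.card G.edgeSet : ℤ) := by
  have hm : ∀ s ∈ (∅ : Set (DkSVoter G)), ∀ i : Fin 2,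
      m s i = if i = (0 : Fin 2) then (1:ℤ) else 0 := by simp
  have hgood : ((0:Fin 2) = 0 ∧ (1:ℤ) = 1) ∨ ((0:Fin 2) = 1 ∧ (1:ℤ) = -1) := Or.inl ⟨rfl, rfl⟩
  have h0 := card_fv0_good G hm hgood
  have h1 := card_fv1_good G hm hgood
  have hF : (Finset.univ.filter fun e : G.edgeSet =>
      2 ≤ tcount G (∅ : Set (DkSVoter G)) (Sum.inr e)).card = 0 := by
    simp [tcount_empty]
  rw [hF] at h0 h1
  rw [MoV_eq, h0]
  push_cast
  omega

lemma deltaMoV_good {S : Set (DkSVoter G)} {m : DkSVoter G → Fin 2 → ℤ} {c : Fin 2} {q : ℤ}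
    (hm : ∀ s ∈ S, ∀ i : Fin 2, m s i = if i = c then q else 0)
    (hgood : (c = 0 ∧ q = 1) ∨ (c = 1 ∧ q = -1)) :
    MoV (DkSEdges G) (DkSScores G) S m
        - MoV (DkSEdges G) (DkSScores G) (∅ : Set (DkSVoter G)) m
      = 2 * ((Finset.univ.filter fun e : G.edgeSet => 2 ≤ tcount G S (Sum.inr e)).card : ℤ) := by
  rw [MoV_eq, MoV_empty, card_fv0_good G hm hgood]
  have h1 := card_fv1_good G hm hgood
  push_cast
  omega

lemma MoV_bad {S : Set (DkSVoter G)} {m : DkSVoter G → Fin 2 → ℤ} {c : Fin 2} {q : ℤ}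
    (hm : ∀ s ∈ S, ∀ i : Fin 2, m s i = if i = c then q else 0)
    (hbad : (c = 0 ∧ q = -1) ∨ (c = 1 ∧ q = 1)) :
    MoV (DkSEdges G) (DkSScores G) S m
      ≤ (Fintype.card X : ℤ) - (Fintype.card G.edgeSet : ℤ) := by
  rw [MoV_eq]
  have h0 : (finalVoters (DkSEdges G) (DkSScores G) S m 0).card ≤ Fintype.card X := by
    rw [← Finset.card_toLeft_add_card_toRight
      (u := finalVoters (DkSEdges G) (DkSScores G) S m 0)]
    have hR : (finalVoters (DkSEdges G) (DkSScores G) S m 0).toRight = ∅ := by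
      ext e
      simp only [Finset.mem_toRight, Finset.notMem_empty, iff_false]
      exact bad_inr_notMem0 G hm hbad e
    rw [hR, Finset.card_empty, add_zero]
    exact le_trans (Finset.card_le_univ _) (le_of_eq Finset.card_univ)
  have h1 : Fintype.card G.edgeSet ≤ (finalVoters (DkSEdges G) (DkSScores G) S m 1).card := by
    rw [← Finset.card_toLeft_add_card_toRight
      (u := finalVoters (DkSEdges G) (DkSScores G) S m 1)]
    have hR : (finalVoters (DkSEdges G) (DkSScores G) S m 1).toRight = Finset.univ := by
      ext e
      simp only [Finset.mem_toRight, Finset.mem_univ, iff_true]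
      exact bad_inr_mem1 G hm hbad e
    rw [hR, Finset.card_univ]
    omega
  push_cast
  omega

lemma flip_bound (S : Set (DkSVoter G)) (B : ℕ)
    (hS : (Finset.univ.filter fun v => v ∈ S).card ≤ B) :
    (Finset.univ.filter fun e : G.edgeSet => 2 ≤ tcount G S (Sum.inr e)).card
      ≤ (Finset.univ.powerset.filter fun X' : Finset X => X'.card ≤ B).sup
          fun X' => edgesWithin G X' := by
  classical
  set A := Finset.univ.filter fun e : G.edgeSet => 2 ≤ tcount G S (Sum.inr e) with hA
  set SE : Finset G.edgeSet := Finset.univ.filter fun e => Sum.inr e ∈ S with hSE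
  set X' : Finset X := SX G S ∪ (A ∩ SE).biUnion (fun e => ends G e \ SX G S) with hX'
  have hwithin : ∀ e ∈ A, ∀ x ∈ (e : Sym2 X), x ∈ X' := by
    intro e he x hx
    have ht : 2 ≤ tcount G S (Sum.inr e) := (Finset.mem_filter.mp he).2
    rw [tcount_inr] at ht
    by_cases hx1 : x ∈ SX G S
    · exact Finset.mem_union_left _ hx1
    · have heS : Sum.inr e ∈ S := by
        by_contra hc
        rw [if_neg hc, add_zero] at ht
        have hsub : ends G e ∩ SX G S ⊆ (ends G e).erase x := by
          intro y hy
          rcases Finset.mem_inter.mp hy with ⟨hy1, hy2⟩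
          refine Finset.mem_erase.mpr ⟨?_, hy1⟩
          rintro rfl; exact hx1 hy2
        have hcard : (ends G e ∩ SX G S).card ≤ 1 := by
          calc (ends G e ∩ SX G S).card ≤ ((ends G e).erase x).card :=
                Finset.card_le_card hsub
            _ = (ends G e).card - 1 := Finset.card_erase_of_mem ((mem_ends G).mpr hx)
            _ = 1 := by rw [ends_card]
        omega
      refine Finset.mem_union_right _ ?_
      refine Finset.mem_biUnion.mpr ⟨e, Finset.mem_inter.mpr
        ⟨he, Finset.mem_filter.mpr ⟨Finset.mem_univ _, heS⟩⟩, ?_⟩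
      exact Finset.mem_sdiff.mpr ⟨(mem_ends G).mpr hx, hx1⟩
  have hcardX' : X'.card ≤ B := by
    have h1 : X'.card ≤ (SX G S).card + ((A ∩ SE).biUnion (fun e => ends G e \ SX G S)).card := by
      rw [hX']
      exact Finset.card_union_le _ _
    have h2 : ((A ∩ SE).biUnion (fun e => ends G e \ SX G S)).card ≤ (A ∩ SE).card := by
      refine le_trans Finset.card_biUnion_le ?_
      calc ∑ e ∈ A ∩ SE, (ends G e \ SX G S).card ≤ ∑ _e ∈ A ∩ SE, 1 := by
            apply Finset.sum_le_sum
            intro e he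
            rcases Finset.mem_inter.mp he with ⟨heA, heSE⟩
            have ht := (Finset.mem_filter.mp heA).2
            rw [tcount_inr] at ht
            have heS : Sum.inr e ∈ S := (Finset.mem_filter.mp heSE).2
            rw [if_pos heS] at ht
            have hint : 1 ≤ (ends G e ∩ SX G S).card := by omega
            have hsd := Finset.card_sdiff_add_card_inter (ends G e) (SX G S)
            have hec := ends_card G e
            omega
        _ = (A ∩ SE).card := by simp
    have h3 : (SX G S).card + SE.card ≤ B := by
      refine le_trans ?_ hS
      rw [aux_card (Finset.univ.filter fun v : DkSVoter G => v ∈ S)]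
      apply add_le_add <;> apply le_of_eq
      · congr 1
        ext a
        simp [SX]
      · congr 1
        ext b
        simp [hSE]
    have h4 : (A ∩ SE).card ≤ SE.card := Finset.card_le_card Finset.inter_subset_right
    omega
  have hAle : A.card ≤ edgesWithin G X' := by
    rw [edgesWithin]
    apply Finset.card_le_card
    intro e he
    exact Finset.mem_filter.mpr ⟨Finset.mem_univ _, hwithin e he⟩
  exact hAle.trans (Finset.le_sup (Finset.mem_filter.mpr
    ⟨Finset.mem_powerset.mpr (Finset.subset_univ _), hcardX'⟩))


/-- Under single-news-article messages with budget `B`, the maximum achievable ΔMoV^S in the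
DkS election instance equals twice the maximum number of edges spanned by at most `B`
vertices of `G`. -/
theorem max_deltaMoV_eq_twice_densest_B_subgraph (B : ℕ) (hB : 1 ≤ B) :
    IsGreatest
      { d : ℤ | ∃ (S : Set (DkSVoter G)) (m : DkSVoter G → Fin 2 → ℤ),
          (Finset.univ.filter fun v => v ∈ S).card ≤ B ∧
          (∃ (c : Fin 2) (q : ℤ), (q = 1 ∨ q = -1) ∧
            ∀ s ∈ S, ∀ i : Fin 2, m s i = if i = c then q else 0) ∧
          d = MoV (DkSEdges G) (DkSScores G) S m -
                MoV (DkSEdges G) (DkSScores G) (∅ : Set (DkSVoter G)) m }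
      (2 * (((Finset.univ.powerset.filter fun X' : Finset X => X'.card ≤ B).sup
          fun X' => edgesWithin G X' : ℕ) : ℤ)) := by
  classical
  constructor
  · -- achievability
    obtain ⟨X'0, hX'0mem, hsup⟩ := Finset.exists_mem_eq_sup
      (Finset.univ.powerset.filter fun X' : Finset X => X'.card ≤ B)
      ⟨∅, Finset.mem_filter.mpr ⟨Finset.mem_powerset.mpr (Finset.empty_subset _), by simp⟩⟩
      (fun X' => edgesWithin G X')
    have hcard : X'0.card ≤ B := (Finset.mem_filter.mp hX'0mem).2
    refine ⟨{v : DkSVoter G | ∃ x ∈ X'0, v = Sum.inl x},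
      fun _ i => if i = (1 : Fin 2) then (-1:ℤ) else 0, ?_,
      ⟨1, -1, Or.inr rfl, fun s _ i => rfl⟩, ?_⟩
    · refine le_trans (le_trans (Finset.card_le_card (t := X'0.map ⟨Sum.inl, Sum.inl_injective⟩) ?_)
        (le_of_eq (Finset.card_map _))) hcard
      intro v hv
      simp only [Finset.mem_filter, Finset.mem_univ, true_and, Set.mem_setOf_eq] at hv
      obtain ⟨x, hx, rfl⟩ := hv
      exact Finset.mem_map.mpr ⟨x, hx, rfl⟩
    · have hm : ∀ s ∈ {v : DkSVoter G | ∃ x ∈ X'0, v = Sum.inl x}, ∀ i : Fin 2,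
          (fun (_ : DkSVoter G) (i : Fin 2) => if i = (1 : Fin 2) then (-1:ℤ) else 0) s i
            = if i = (1 : Fin 2) then (-1:ℤ) else 0 := fun s _ i => rfl
      rw [deltaMoV_good G hm (Or.inr ⟨rfl, rfl⟩)]
      have hF : (Finset.univ.filter fun e : G.edgeSet =>
          2 ≤ tcount G {v : DkSVoter G | ∃ x ∈ X'0, v = Sum.inl x} (Sum.inr e)).card
          = edgesWithin G X'0 := by
        rw [edgesWithin]
        apply card_filter_iff
        intro e
        rw [tcount_inr]
        have hSXeq : SX G {v : DkSVoter G | ∃ x ∈ X'0, v = Sum.inl x} = X'0 := by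
          ext x
          simp [SX, Set.mem_setOf_eq]
        have hnotin : (Sum.inr e : DkSVoter G) ∉
            {v : DkSVoter G | ∃ x ∈ X'0, v = Sum.inl x} := by
          simp [Set.mem_setOf_eq]
        rw [hSXeq, if_neg hnotin, add_zero]
        constructor
        · intro h x hx
          have heq : ends G e ∩ X'0 = ends G e :=
            Finset.eq_of_subset_of_card_le Finset.inter_subset_left
              (by rw [ends_card]; exact h)
          have hx' : x ∈ ends G e ∩ X'0 := by
            rw [heq]; exact (mem_ends G).mpr hx
          exact (Finset.mem_inter.mp hx').2
        · intro h
          have hsub : ends G e ⊆ X'0 := fun x hx => h x ((mem_ends G).mp hx)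
          have heq : ends G e ∩ X'0 = ends G e := Finset.inter_eq_left.mpr hsub
          rw [heq, ends_card]
      rw [hsup, hF]
  · -- upper bound
    rintro d ⟨S, m, hbudget, ⟨c, q, hq, hm⟩, rfl⟩
    have hsupnn : (0:ℤ) ≤ 2 * (((Finset.univ.powerset.filter
        fun X' : Finset X => X'.card ≤ B).sup fun X' => edgesWithin G X' : ℕ) : ℤ) := by
      positivity
    have hflip := flip_bound G S B hbudget
    have hflip' : ((Finset.univ.filter fun e : G.edgeSet =>
          2 ≤ tcount G S (Sum.inr e)).card : ℤ)
        ≤ (((Finset.univ.powerset.filter fun X' : Finset X => X'.card ≤ B).sup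
          fun X' => edgesWithin G X' : ℕ) : ℤ) := by exact_mod_cast hflip
    fin_cases c <;> rcases hq with rfl | rfl
    · rw [deltaMoV_good G hm (Or.inl ⟨by decide, rfl⟩)]
      linarith
    · have hb := MoV_bad G hm (Or.inl ⟨by decide, rfl⟩)
      rw [MoV_empty]
      linarith
    · have hb := MoV_bad G hm (Or.inr ⟨by decide, rfl⟩)
      rw [MoV_empty]
      linarith
    · rw [deltaMoV_good G hm (Or.inr ⟨by decide, rfl⟩)]
      linarith


end DkS
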